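/- The number of binary fragmentation trees of the set [n] = {1,...,n} equals (2n-2)!/(2^{n-1}(n-1)!), i.e., the double factorial (2n-3)!! for n ≥ 1. -/
import Mathlib


open Finset

/-- `t` is a binary fragmentation (hierarchy) of the finite set `B`:
a laminar family of nonempty subsets of `B` containing `B`, in which every
member with at least two elements splits into exactly two disjoint nonempty
members (its two children), recursively down to singletons. -/
def IsBinFrag (B : Finset ℕ) (t : Finset (Finset ℕ)) : Prop :=
  B ∈ t ∧ (∀ A ∈ t, A.Nonempty ∧ A ⊆ B) ∧
  (∀ C ∈ t, ∀ D ∈ t, C ⊆ D ∨ D ⊆ C ∨ Disjoint C D) ∧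
  (∀ b ∈ B, {b} ∈ t) ∧
  (∀ A ∈ t, 2 ≤ A.card →
    ∃ C ∈ t, ∃ D ∈ t, Disjoint C D ∧ C ∪ D = A ∧ C.Nonempty ∧ D.Nonempty)

-- The (finite) set of all binary fragmentations of `B`.
open scoped Classical in
noncomputable def allBinFrags (B : Finset ℕ) : Finset (Finset (Finset ℕ)) :=
  B.powerset.powerset.filter (fun t => IsBinFrag B t)

/-- `ch` assigns to each internal vertex `A` of the fragmentation `t` its
two children `(ch A).1`, `(ch A).2`. -/
def IsChildFun (t : Finset (Finset ℕ)) (ch : Finset ℕ → Finset ℕ × Finset ℕ) : Prop :=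
  ∀ A ∈ t, 2 ≤ A.card →
    (ch A).1 ∈ t ∧ (ch A).2 ∈ t ∧ Disjoint (ch A).1 (ch A).2 ∧
    (ch A).1 ∪ (ch A).2 = A ∧ (ch A).1.Nonempty ∧ (ch A).2.Nonempty

lemma mem_allBinFrags {B : Finset ℕ} {t : Finset (Finset ℕ)} :
    t ∈ allBinFrags B ↔ IsBinFrag B t := by
  classical
  simp only [allBinFrags, Finset.mem_filter, Finset.mem_powerset]
  constructor
  · exact fun h => h.2
  · intro h
    refine ⟨fun A hA => Finset.mem_powerset.2 ((h.2.1 A hA).2), h⟩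

/-- cardinality of a fragmentation -/
lemma frag_card : ∀ (n : ℕ) (B : Finset ℕ) (t : Finset (Finset ℕ)),
    B.card ≤ n → IsBinFrag B t → t.card = 2 * B.card - 1 := by
  intro n
  induction n with
  | zero =>
    intro B t hB h
    have hne := (h.2.1 B h.1).1
    rw [Nat.le_zero, Finset.card_eq_zero] at hB
    exact absurd hB hne.ne_empty
  | succ n ih =>
    intro B t hB h
    obtain ⟨hBt, hsub, hlam, hsing, hsplit⟩ := h
    by_cases h1 : B.card ≤ 1
    · have hne := (hsub B hBt).1
      have hc : B.card = 1 := le_antisymm h1 (Finset.card_pos.2 hne)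
      have ht : t = {B} := by
        apply Finset.eq_singleton_iff_unique_mem.2
        refine ⟨hBt, fun A hA => ?_⟩
        exact Finset.eq_of_subset_of_card_le (hsub A hA).2
          (by rw [hc]; exact Finset.card_pos.2 (hsub A hA).1)
      rw [ht, hc]; simp
    · push_neg at h1
      obtain ⟨C, hCt, D, hDt, hCD, hU, hCne, hDne⟩ := hsplit B hBt h1
      have hCB : C ⊆ B := by rw [← hU]; exact Finset.subset_union_left
      have hDB : D ⊆ B := by rw [← hU]; exact Finset.subset_union_right
      have hCBne : C ≠ B := by
        intro hEq
        obtain ⟨d, hd⟩ := hDne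
        exact Finset.disjoint_right.1 hCD hd (hEq ▸ hDB hd)
      have hDBne : D ≠ B := by
        intro hEq
        obtain ⟨c, hc⟩ := hCne
        exact Finset.disjoint_left.1 hCD hc (hEq ▸ hCB hc)
      have key : ∀ A ∈ t, A = B ∨ A ⊆ C ∨ A ⊆ D := by
        intro A hA
        have hAne := (hsub A hA).1
        have hAB := (hsub A hA).2
        have subD : Disjoint A C → A ⊆ D := by
          intro hd x hx
          have hxB := hAB hx
          rw [← hU, Finset.mem_union] at hxB
          rcases hxB with hxC | hxD
          · exact absurd hxC (Finset.disjoint_left.1 hd hx)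
          · exact hxD
        rcases hlam A hA C hCt with hAC | hCA | hACd
        · exact Or.inr (Or.inl hAC)
        · rcases hlam A hA D hDt with hAD | hDA | hADd
          · obtain ⟨c, hc⟩ := hCne
            exact (Finset.disjoint_left.1 hCD hc (hAD (hCA hc))).elim
          · left
            exact Finset.Subset.antisymm hAB
              (by rw [← hU]; exact Finset.union_subset hCA hDA)
          · right; left
            intro x hx
            have hxB := hAB hx
            rw [← hU, Finset.mem_union] at hxB
            rcases hxB with hxC | hxD
            · exact hxC
            · exact absurd hxD (Finset.disjoint_left.1 hADd hx)
        · exact Or.inr (Or.inr (subD hACd))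
      classical
      set tC := t.filter (fun A => A ⊆ C) with htC
      set tD := t.filter (fun A => A ⊆ D) with htD
      have hfragC : IsBinFrag C tC := by
        refine ⟨Finset.mem_filter.2 ⟨hCt, Finset.Subset.refl C⟩, ?_, ?_, ?_, ?_⟩
        · intro A hA
          have := Finset.mem_filter.1 hA
          exact ⟨(hsub A this.1).1, this.2⟩
        · intro X hX Y hY
          exact hlam X (Finset.mem_filter.1 hX).1 Y (Finset.mem_filter.1 hY).1
        · intro b hb
          exact Finset.mem_filter.2 ⟨hsing b (hCB hb), Finset.singleton_subset_iff.2 hb⟩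
        · intro A hA h2
          obtain ⟨hAt, hAC⟩ := Finset.mem_filter.1 hA
          obtain ⟨C', hC', D', hD', hd', hu', hn1, hn2⟩ := hsplit A hAt h2
          refine ⟨C', Finset.mem_filter.2 ⟨hC', ?_⟩, D', Finset.mem_filter.2 ⟨hD', ?_⟩,
            hd', hu', hn1, hn2⟩
          · exact (Finset.subset_union_left.trans (hu' ▸ hAC : C' ∪ D' ⊆ C))
          · exact (Finset.subset_union_right.trans (hu' ▸ hAC : C' ∪ D' ⊆ C))
      have hfragD : IsBinFrag D tD := by
        refine ⟨Finset.mem_filter.2 ⟨hDt, Finset.Subset.refl D⟩, ?_, ?_, ?_, ?_⟩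
        · intro A hA
          have := Finset.mem_filter.1 hA
          exact ⟨(hsub A this.1).1, this.2⟩
        · intro X hX Y hY
          exact hlam X (Finset.mem_filter.1 hX).1 Y (Finset.mem_filter.1 hY).1
        · intro b hb
          exact Finset.mem_filter.2 ⟨hsing b (hDB hb), Finset.singleton_subset_iff.2 hb⟩
        · intro A hA h2
          obtain ⟨hAt, hAD⟩ := Finset.mem_filter.1 hA
          obtain ⟨C', hC', D', hD', hd', hu', hn1, hn2⟩ := hsplit A hAt h2
          refine ⟨C', Finset.mem_filter.2 ⟨hC', ?_⟩, D', Finset.mem_filter.2 ⟨hD', ?_⟩,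
            hd', hu', hn1, hn2⟩
          · exact (Finset.subset_union_left.trans (hu' ▸ hAD : C' ∪ D' ⊆ D))
          · exact (Finset.subset_union_right.trans (hu' ▸ hAD : C' ∪ D' ⊆ D))
      have hCcard : C.card < B.card := Finset.card_lt_card (lt_of_le_of_ne hCB hCBne)
      have hDcard : D.card < D.card + 1 := Nat.lt_succ_self _
      have hDcard' : D.card < B.card := Finset.card_lt_card (lt_of_le_of_ne hDB hDBne)
      have hcC := ih C tC (by omega) hfragC
      have hcD := ih D tD (by omega) hfragD
      have hBnotC : B ∉ tC := by
        intro hmem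
        have hBC := (Finset.mem_filter.1 hmem).2
        exact hCBne (Finset.Subset.antisymm hCB hBC)
      have hBnotD : B ∉ tD := by
        intro hmem
        have hBD := (Finset.mem_filter.1 hmem).2
        exact hDBne (Finset.Subset.antisymm hDB hBD)
      have hdisj : Disjoint tC tD := by
        rw [Finset.disjoint_left]
        intro A hA hA'
        have h1' := (Finset.mem_filter.1 hA).2
        have h2' := (Finset.mem_filter.1 hA').2
        obtain ⟨a, ha⟩ := (hsub A (Finset.mem_filter.1 hA).1).1
        exact Finset.disjoint_left.1 hCD (h1' ha) (h2' ha)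
      have hteq : t = insert B (tC ∪ tD) := by
        apply Finset.Subset.antisymm
        · intro A hA
          rcases key A hA with rfl | hAC | hAD
          · exact Finset.mem_insert_self _ _
          · exact Finset.mem_insert_of_mem
              (Finset.mem_union_left _ (Finset.mem_filter.2 ⟨hA, hAC⟩))
          · exact Finset.mem_insert_of_mem
              (Finset.mem_union_right _ (Finset.mem_filter.2 ⟨hA, hAD⟩))
        · intro A hA
          rcases Finset.mem_insert.1 hA with rfl | hA'
          · exact hBt
          · rcases Finset.mem_union.1 hA' with h' | h'
            · exact (Finset.mem_filter.1 h').1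
            · exact (Finset.mem_filter.1 h').1
      have hBcard : B.card = C.card + D.card := by
        rw [← hU, Finset.card_union_of_disjoint hCD]
      have hcpos : 1 ≤ C.card := Finset.card_pos.2 hCne
      have hdpos : 1 ≤ D.card := Finset.card_pos.2 hDne
      rw [hteq, Finset.card_insert_of_notMem (by
        intro hmem
        rcases Finset.mem_union.1 hmem with h' | h'
        · exact hBnotC h'
        · exact hBnotD h'),
        Finset.card_union_of_disjoint hdisj, hcC, hcD, hBcard]
      omega

def insMap (m : ℕ) (t' : Finset (Finset ℕ)) (A : Finset ℕ) : Finset (Finset ℕ) :=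
  t'.filter (fun B => ¬ A ⊆ B) ∪ (t'.filter (fun B => A ⊆ B)).image (insert m) ∪ {A, {m}}

def resMap (m : ℕ) (t : Finset (Finset ℕ)) : Finset (Finset ℕ) :=
  (t.image (fun X => X.erase m)).erase ∅

lemma mem_insMap {m : ℕ} {t' : Finset (Finset ℕ)} {A X : Finset ℕ} :
    X ∈ insMap m t' A ↔
      (X ∈ t' ∧ ¬ A ⊆ X) ∨ (∃ B ∈ t', A ⊆ B ∧ X = insert m B) ∨ X = A ∨ X = {m} := by
  simp only [insMap, Finset.mem_union, Finset.mem_filter, Finset.mem_image,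
    Finset.mem_insert, Finset.mem_singleton]
  constructor
  · rintro ((⟨h1, h2⟩ | ⟨B, ⟨hB, hAB⟩, rfl⟩) | h | h)
    · exact Or.inl ⟨h1, h2⟩
    · exact Or.inr (Or.inl ⟨B, hB, hAB, rfl⟩)
    · exact Or.inr (Or.inr (Or.inl h))
    · exact Or.inr (Or.inr (Or.inr h))
  · rintro (⟨h1, h2⟩ | ⟨B, hB, hAB, rfl⟩ | h | h)
    · exact Or.inl (Or.inl ⟨h1, h2⟩)
    · exact Or.inl (Or.inr ⟨B, ⟨hB, hAB⟩, rfl⟩)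
    · exact Or.inr (Or.inl h)
    · exact Or.inr (Or.inr h)

lemma mem_resMap {m : ℕ} {t : Finset (Finset ℕ)} {X : Finset ℕ} :
    X ∈ resMap m t ↔ X ≠ ∅ ∧ ∃ Y ∈ t, Y.erase m = X := by
  simp only [resMap, Finset.mem_erase, Finset.mem_image]

lemma resMap_frag {m : ℕ} {B : Finset ℕ} (hm : m ∉ B) (hBne : B.Nonempty)
    {t : Finset (Finset ℕ)} (h : IsBinFrag (insert m B) t) :
    IsBinFrag B (resMap m t) := by
  obtain ⟨hBt, hsub, hlam, hsing, hsplit⟩ := h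
  have hmemres : ∀ Z ∈ t, m ∉ Z → Z ∈ resMap m t := by
    intro Z hZ hmZ
    exact mem_resMap.2 ⟨(hsub Z hZ).1.ne_empty, Z, hZ, Finset.erase_eq_of_notMem hmZ⟩
  have hnotm : ∀ Z ∈ t, Z ⊆ B → m ∉ Z := fun Z _ hZB hmZ => hm (hZB hmZ)
  refine ⟨?_, ?_, ?_, ?_, ?_⟩
  · exact mem_resMap.2 ⟨hBne.ne_empty, insert m B, hBt, Finset.erase_insert hm⟩
  · intro X hX
    obtain ⟨hXne, Y, hY, rfl⟩ := mem_resMap.1 hX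
    refine ⟨Finset.nonempty_iff_ne_empty.2 hXne, ?_⟩
    have := Finset.erase_subset_erase m (hsub Y hY).2
    rwa [Finset.erase_insert hm] at this
  · intro X hX X' hX'
    obtain ⟨hXne, Y, hY, rfl⟩ := mem_resMap.1 hX
    obtain ⟨hXne', Y', hY', rfl⟩ := mem_resMap.1 hX'
    rcases hlam Y hY Y' hY' with h' | h' | h'
    · exact Or.inl (Finset.erase_subset_erase m h')
    · exact Or.inr (Or.inl (Finset.erase_subset_erase m h'))
    · exact Or.inr (Or.inr (h'.mono (Finset.erase_subset m Y) (Finset.erase_subset m Y')))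
  · intro b hb
    have hbm : b ≠ m := fun hEq => hm (hEq ▸ hb)
    refine mem_resMap.2 ⟨Finset.singleton_ne_empty b, {b},
      hsing b (Finset.mem_insert_of_mem hb), ?_⟩
    rw [Finset.erase_eq_of_notMem (by simp [hbm.symm])]
  · intro X hX h2
    obtain ⟨hXne, Y, hY, hYX⟩ := mem_resMap.1 hX
    have hnomem : ∀ Z ∈ t, m ∉ Z → 2 ≤ Z.card →
        ∃ C ∈ resMap m t, ∃ D ∈ resMap m t,
          Disjoint C D ∧ C ∪ D = Z ∧ C.Nonempty ∧ D.Nonempty := by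
      intro Z hZ hmZ h2'
      obtain ⟨C, hC, D, hD, hcd, hu, hc1, hd1⟩ := hsplit Z hZ h2'
      have hmC : m ∉ C := fun hc => hmZ (hu ▸ Finset.mem_union_left _ hc)
      have hmD : m ∉ D := fun hc => hmZ (hu ▸ Finset.mem_union_right _ hc)
      exact ⟨C, hmemres C hC hmC, D, hmemres D hD hmD, hcd, hu, hc1, hd1⟩
    by_cases hmY : m ∈ Y
    · have hcY : Y.card = X.card + 1 := by
        rw [← hYX]; rw [Finset.card_erase_of_mem hmY]
        have : 1 ≤ Y.card := Finset.card_pos.2 ⟨m, hmY⟩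
        omega
      have h3 : 2 ≤ Y.card := by omega
      obtain ⟨C, hC, D, hD, hcd, hu, hc1, hd1⟩ := hsplit Y hY h3
      have main : ∀ C D : Finset ℕ, C ∈ t → D ∈ t → Disjoint C D → C ∪ D = Y →
          C.Nonempty → D.Nonempty → m ∈ D →
          ∃ C' ∈ resMap m t, ∃ D' ∈ resMap m t,
            Disjoint C' D' ∧ C' ∪ D' = X ∧ C'.Nonempty ∧ D'.Nonempty := by
        clear hC hD hcd hu hc1 hd1
        intro C D hC hD hcd hu hc1 hd1 hmD
        have hmC : m ∉ C := fun hc => Finset.disjoint_left.1 hcd hc hmD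
        have hXeq : X = C ∪ D.erase m := by
          rw [← hYX, ← hu, Finset.erase_union_distrib,
            Finset.erase_eq_of_notMem hmC]
        by_cases hD1 : D = {m}
        · have hXC : X = C := by
            rw [hXeq, hD1, Finset.erase_singleton, Finset.union_empty]
          obtain ⟨C1, hC1, C2, hC2, hcd2, hu2, hn1, hn2⟩ :=
            hsplit C hC (by rw [← hXC]; exact h2)
          have hmC1 : m ∉ C1 := fun hc => hmC (hu2 ▸ Finset.mem_union_left _ hc)
          have hmC2 : m ∉ C2 := fun hc => hmC (hu2 ▸ Finset.mem_union_right _ hc)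
          exact ⟨C1, hmemres C1 hC1 hmC1, C2, hmemres C2 hC2 hmC2, hcd2,
            by rw [hu2, hXC], hn1, hn2⟩
        · have hDene : D.erase m ≠ ∅ := by
            intro hEq
            apply hD1
            apply Finset.Subset.antisymm
            · intro x hx
              by_cases hxm : x = m
              · simp [hxm]
              · exact absurd (Finset.mem_erase.2 ⟨hxm, hx⟩) (by rw [hEq]; simp)
            · simp [hmD]
          refine ⟨C, hmemres C hC hmC, D.erase m,
            mem_resMap.2 ⟨hDene, D, hD, rfl⟩, ?_, hXeq.symm, hc1,
            Finset.nonempty_iff_ne_empty.2 hDene⟩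
          exact hcd.mono_right (Finset.erase_subset m D)
      have hmCD : m ∈ C ∪ D := by rw [hu]; exact hmY
      rcases Finset.mem_union.1 hmCD with hmD | hmD
      · exact main D C hD hC hcd.symm (by rw [Finset.union_comm]; exact hu) hd1 hc1 hmD
      · exact main C D hC hD hcd hu hc1 hd1 hmD
    · have hXY : X = Y := by rw [← hYX, Finset.erase_eq_of_notMem hmY]
      subst hXY
      exact hnomem X hY hmY h2

lemma insMap_frag {m : ℕ} {B : Finset ℕ} (hm : m ∉ B)
    {t' : Finset (Finset ℕ)} (h : IsBinFrag B t') {A : Finset ℕ} (hA : A ∈ t') :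
    IsBinFrag (insert m B) (insMap m t' A) := by
  obtain ⟨hBt', hsub', hlam', hsing', hsplit'⟩ := h
  have hmZ : ∀ Z ∈ t', m ∉ Z := fun Z hZ hc => hm ((hsub' Z hZ).2 hc)
  have hAne : A.Nonempty := (hsub' A hA).1
  have hAB : A ⊆ B := (hsub' A hA).2
  have hmA : m ∉ A := hmZ A hA
  refine ⟨?_, ?_, ?_, ?_, ?_⟩
  · exact mem_insMap.2 (Or.inr (Or.inl ⟨B, hBt', hAB, rfl⟩))
  · intro X hX
    rcases mem_insMap.1 hX with ⟨hXt, _⟩ | ⟨B', hB', _, rfl⟩ | rfl | rfl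
    · exact ⟨(hsub' X hXt).1, ((hsub' X hXt).2).trans (Finset.subset_insert m B)⟩
    · exact ⟨Finset.insert_nonempty m B',
        Finset.insert_subset_insert m (hsub' B' hB').2⟩
    · exact ⟨hAne, hAB.trans (Finset.subset_insert m B)⟩
    · exact ⟨Finset.singleton_nonempty m,
        Finset.singleton_subset_iff.2 (Finset.mem_insert_self m B)⟩
  · -- laminarity
    have h12 : ∀ X ∈ t', ¬ A ⊆ X → ∀ B' ∈ t', A ⊆ B' →
        X ⊆ insert m B' ∨ Disjoint X (insert m B') := by
      intro X hX hnAX B' hB' hAB'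
      rcases hlam' X hX B' hB' with h' | h' | h'
      · exact Or.inl (h'.trans (Finset.subset_insert m B'))
      · exact absurd (hAB'.trans h') hnAX
      · exact Or.inr (Finset.disjoint_insert_right.2 ⟨hmZ X hX, h'⟩)
    have h13 : ∀ X ∈ t', ¬ A ⊆ X → X ⊆ A ∨ Disjoint X A := by
      intro X hX hnAX
      rcases hlam' X hX A hA with h' | h' | h'
      · exact Or.inl h'
      · exact absurd h' hnAX
      · exact Or.inr h'
    have h22 : ∀ B' ∈ t', ∀ B'' ∈ t', A ⊆ B' → A ⊆ B'' →
        insert m B' ⊆ insert m B'' ∨ insert m B'' ⊆ insert m B' := by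
      intro B' hB' B'' hB'' h1 h2
      rcases hlam' B' hB' B'' hB'' with h' | h' | h'
      · exact Or.inl (Finset.insert_subset_insert m h')
      · exact Or.inr (Finset.insert_subset_insert m h')
      · obtain ⟨a, ha⟩ := hAne
        exact absurd (h2 ha) (Finset.disjoint_left.1 h' (h1 ha))
    intro X hX X' hX'
    rcases mem_insMap.1 hX with ⟨hXt, hnAX⟩ | ⟨B', hB', hAB', rfl⟩ | rfl | rfl <;>
      rcases mem_insMap.1 hX' with ⟨hXt', hnAX'⟩ | ⟨B'', hB'', hAB'', rfl⟩ | rfl | rfl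
    · exact hlam' X hXt X' hXt'
    · rcases h12 X hXt hnAX B'' hB'' hAB'' with h' | h'
      · exact Or.inl h'
      · exact Or.inr (Or.inr h')
    · rcases h13 X hXt hnAX with h' | h'
      · exact Or.inl h'
      · exact Or.inr (Or.inr h')
    · exact Or.inr (Or.inr (Finset.disjoint_singleton_right.2 (hmZ X hXt)))
    · rcases h12 X' hXt' hnAX' B' hB' hAB' with h' | h'
      · exact Or.inr (Or.inl h')
      · exact Or.inr (Or.inr h'.symm)
    · rcases h22 B' hB' B'' hB'' hAB' hAB'' with h' | h'
      · exact Or.inl h'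
      · exact Or.inr (Or.inl h')
    · exact Or.inr (Or.inl (hAB'.trans (Finset.subset_insert m B')))
    · exact Or.inr (Or.inl (Finset.singleton_subset_iff.2
        (Finset.mem_insert_self m B')))
    · rcases h13 X' hXt' hnAX' with h' | h'
      · exact Or.inr (Or.inl h')
      · exact Or.inr (Or.inr h'.symm)
    · exact Or.inl (hAB''.trans (Finset.subset_insert m B''))
    · exact Or.inl (Finset.Subset.refl _)
    · exact Or.inr (Or.inr (Finset.disjoint_singleton_right.2 hmA))
    · exact Or.inr (Or.inr (Finset.disjoint_singleton_left.2 (hmZ X' hXt')))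
    · exact Or.inl (Finset.singleton_subset_iff.2 (Finset.mem_insert_self m B''))
    · exact Or.inr (Or.inr (Finset.disjoint_singleton_left.2 hmA))
    · exact Or.inl (Finset.Subset.refl _)
  · -- singletons
    intro b hb
    rcases Finset.mem_insert.1 hb with rfl | hbB
    · exact mem_insMap.2 (Or.inr (Or.inr (Or.inr rfl)))
    · by_cases hAb : A ⊆ {b}
      · have : A = {b} := Finset.Subset.antisymm hAb
          (Finset.singleton_subset_iff.2 (by
            obtain ⟨a, ha⟩ := hAne
            have := hAb ha
            rw [Finset.mem_singleton] at this
            rwa [← this]))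
        exact mem_insMap.2 (Or.inr (Or.inr (Or.inl this.symm)))
      · exact mem_insMap.2 (Or.inl ⟨hsing' b hbB, hAb⟩)
  · -- splitting
    intro X hX h2
    rcases mem_insMap.1 hX with ⟨hXt, hnAX⟩ | ⟨B', hB', hAB', rfl⟩ | rfl | rfl
    · obtain ⟨C, hC, D, hD, hcd, hu, hc1, hd1⟩ := hsplit' X hXt h2
      have hnAC : ¬ A ⊆ C := fun hc =>
        hnAX (hc.trans (hu ▸ Finset.subset_union_left))
      have hnAD : ¬ A ⊆ D := fun hc =>
        hnAX (hc.trans (hu ▸ Finset.subset_union_right))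
      exact ⟨C, mem_insMap.2 (Or.inl ⟨hC, hnAC⟩), D,
        mem_insMap.2 (Or.inl ⟨hD, hnAD⟩), hcd, hu, hc1, hd1⟩
    · by_cases hAB'' : A = B'
      · subst hAB''
        refine ⟨A, mem_insMap.2 (Or.inr (Or.inr (Or.inl rfl))), {m},
          mem_insMap.2 (Or.inr (Or.inr (Or.inr rfl))),
          Finset.disjoint_singleton_right.2 hmA, ?_, hAne,
          Finset.singleton_nonempty m⟩
        rw [Finset.insert_eq, Finset.union_comm]
      · have hss : A ⊂ B' := lt_of_le_of_ne hAB' hAB''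
        have h2' : 2 ≤ B'.card := by
          have := Finset.card_lt_card hss
          have := Finset.card_pos.2 hAne
          omega
        obtain ⟨C, hC, D, hD, hcd, hu, hc1, hd1⟩ := hsplit' B' hB' h2'
        have main : ∀ C D : Finset ℕ, C ∈ t' → D ∈ t' → Disjoint C D →
            C ∪ D = B' → C.Nonempty → D.Nonempty → A ⊆ C →
            ∃ C' ∈ insMap m t' A, ∃ D' ∈ insMap m t' A,
              Disjoint C' D' ∧ C' ∪ D' = insert m B' ∧ C'.Nonempty ∧ D'.Nonempty := by
          clear hC hD hcd hu hc1 hd1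
          intro C D hC hD hcd hu hc1 hd1 hAC
          have hnAD : ¬ A ⊆ D := by
            intro hc
            obtain ⟨a, ha⟩ := hAne
            exact Finset.disjoint_left.1 hcd (hAC ha) (hc ha)
          refine ⟨insert m C, mem_insMap.2 (Or.inr (Or.inl ⟨C, hC, hAC, rfl⟩)), D,
            mem_insMap.2 (Or.inl ⟨hD, hnAD⟩),
            Finset.disjoint_insert_left.2 ⟨hmZ D hD, hcd⟩, ?_,
            Finset.insert_nonempty m C, hd1⟩
          rw [Finset.insert_union, hu]
        have hsubOr : A ⊆ C ∨ A ⊆ D := by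
          have subD : Disjoint A C → A ⊆ D := by
            intro hd x hx
            have hxB := hAB' hx
            rw [← hu, Finset.mem_union] at hxB
            rcases hxB with hxC | hxD
            · exact absurd hxC (Finset.disjoint_left.1 hd hx)
            · exact hxD
          have subC : Disjoint A D → A ⊆ C := by
            intro hd x hx
            have hxB := hAB' hx
            rw [← hu, Finset.mem_union] at hxB
            rcases hxB with hxC | hxD
            · exact hxC
            · exact absurd hxD (Finset.disjoint_left.1 hd hx)
          rcases hlam' A hA C hC with h' | h' | h'
          · exact Or.inl h'
          · rcases hlam' A hA D hD with h'' | h'' | h'' 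
            · exact Or.inr h''
            · exact absurd (Finset.Subset.antisymm (hu ▸ Finset.union_subset h' h'')
                hAB').symm hAB''
            · exact Or.inl (subC h'')
          · exact Or.inr (subD h')
        rcases hsubOr with hAC | hAD
        · exact main C D hC hD hcd hu hc1 hd1 hAC
        · obtain ⟨C', h1', D', h2', h3', h4', h5', h6'⟩ :=
            main D C hD hC hcd.symm (by rw [Finset.union_comm]; exact hu) hd1 hc1 hAD
          exact ⟨C', h1', D', h2', h3', h4', h5', h6'⟩
    · obtain ⟨C, hC, D, hD, hcd, hu, hc1, hd1⟩ := hsplit' X hA h2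
      have hnAC : ¬ X ⊆ C := by
        intro hc
        obtain ⟨d, hd⟩ := hd1
        exact Finset.disjoint_right.1 hcd hd (hc (hu ▸ Finset.mem_union_right _ hd))
      have hnAD : ¬ X ⊆ D := by
        intro hc
        obtain ⟨c, hcm⟩ := hc1
        exact Finset.disjoint_left.1 hcd hcm (hc (hu ▸ Finset.mem_union_left _ hcm))
      exact ⟨C, mem_insMap.2 (Or.inl ⟨hC, hnAC⟩), D,
        mem_insMap.2 (Or.inl ⟨hD, hnAD⟩), hcd, hu, hc1, hd1⟩
    · simp at h2

lemma resMap_insMap {m : ℕ} {B : Finset ℕ} (hm : m ∉ B)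
    {t' : Finset (Finset ℕ)} (h : IsBinFrag B t') {A : Finset ℕ} (hA : A ∈ t') :
    resMap m (insMap m t' A) = t' := by
  obtain ⟨hBt', hsub', hlam', hsing', hsplit'⟩ := h
  have hmZ : ∀ Z ∈ t', m ∉ Z := fun Z hZ hc => hm ((hsub' Z hZ).2 hc)
  ext X
  rw [mem_resMap]
  constructor
  · rintro ⟨hXne, Y, hY, rfl⟩
    rcases mem_insMap.1 hY with ⟨hYt, _⟩ | ⟨B', hB', _, rfl⟩ | rfl | rfl
    · rwa [Finset.erase_eq_of_notMem (hmZ Y hYt)]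
    · rwa [Finset.erase_insert (hmZ B' hB')]
    · rwa [Finset.erase_eq_of_notMem (hmZ Y hA)]
    · rw [Finset.erase_singleton] at hXne ⊢
      exact absurd rfl hXne
  · intro hX
    refine ⟨(hsub' X hX).1.ne_empty, ?_⟩
    by_cases hAX : A ⊆ X
    · exact ⟨insert m X, mem_insMap.2 (Or.inr (Or.inl ⟨X, hX, hAX, rfl⟩)),
        Finset.erase_insert (hmZ X hX)⟩
    · exact ⟨X, mem_insMap.2 (Or.inl ⟨hX, hAX⟩),
        Finset.erase_eq_of_notMem (hmZ X hX)⟩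

lemma insMap_inj {m : ℕ} {B : Finset ℕ} (hm : m ∉ B)
    {t' : Finset (Finset ℕ)} (h : IsBinFrag B t') {A A' : Finset ℕ}
    (hA : A ∈ t') (hA' : A' ∈ t') (heq : insMap m t' A = insMap m t' A') :
    A = A' := by
  have hmZ : ∀ Z ∈ t', m ∉ Z := fun Z hZ hc => hm ((h.2.1 Z hZ).2 hc)
  have key : ∀ A A' : Finset ℕ, A ∈ t' → A' ∈ t' →
      insMap m t' A = insMap m t' A' → A ⊆ A' := by
    intro A A' hA hA' heq
    have hmem : insert m A' ∈ insMap m t' A := by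
      rw [heq]
      exact mem_insMap.2 (Or.inr (Or.inl ⟨A', hA', Finset.Subset.refl A', rfl⟩))
    rcases mem_insMap.1 hmem with ⟨hYt, _⟩ | ⟨B', hB', hABs, hins⟩ | hEq | hEq
    · exact absurd (Finset.mem_insert_self m A') (hmZ _ hYt)
    · have : A' = B' := by
        have := congrArg (fun s => Finset.erase s m) hins
        simpa [Finset.erase_insert (hmZ A' hA'), Finset.erase_insert (hmZ B' hB')]
          using this
      rwa [← this] at hABs
    · exact absurd (hEq ▸ Finset.mem_insert_self m A') (hmZ A hA)
    · have : A' ⊆ {m} := by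
        rw [← hEq]; exact Finset.subset_insert m A'
      obtain ⟨a, ha⟩ := (h.2.1 A' hA').1
      have := this ha
      rw [Finset.mem_singleton] at this
      exact absurd (this ▸ ha) (hmZ A' hA')
  exact Finset.Subset.antisymm (key A A' hA hA' heq) (key A' A hA' hA heq.symm)

lemma frag_fiber {m : ℕ} {B : Finset ℕ} (hm : m ∉ B) (hBne : B.Nonempty)
    {t : Finset (Finset ℕ)} (h : IsBinFrag (insert m B) t) :
    ∃ A ∈ resMap m t, t = insMap m (resMap m t) A := by
  obtain ⟨hBt, hsub, hlam, hsing, hsplit⟩ := h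
  have hmm : m ∈ insert m B := Finset.mem_insert_self m B
  classical
  set S := t.filter (fun X => m ∈ X ∧ 2 ≤ X.card) with hS
  have hSne : S.Nonempty := by
      refine ⟨insert m B, Finset.mem_filter.2 ⟨hBt, hmm, ?_⟩⟩
      rw [Finset.card_insert_of_notMem hm]
      have := Finset.card_pos.2 hBne
      omega
  obtain ⟨P, hPS, hPmin⟩ := Finset.exists_min_image S Finset.card hSne
  obtain ⟨hPt, hmP, hP2⟩ := Finset.mem_filter.1 hPS
  have hPsub : ∀ X ∈ t, m ∈ X → X ≠ {m} → P ⊆ X := by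
    intro X hX hmX hXne
    have hX2 : 2 ≤ X.card := by
      rcases Nat.lt_or_ge X.card 2 with h' | h'
      · have h1 : X.card = 1 := by
          have := Finset.card_pos.2 ⟨m, hmX⟩
          omega
        obtain ⟨x, hx⟩ := Finset.card_eq_one.1 h1
        rw [hx] at hmX
        rw [Finset.mem_singleton] at hmX
        exact absurd (hmX ▸ hx) hXne
      · exact h'
    have hXS : X ∈ S := Finset.mem_filter.2 ⟨hX, hmX, hX2⟩
    rcases hlam P hPt X hX with h' | h' | h'
    · exact h'
    · rw [Finset.eq_of_subset_of_card_le h' (hPmin X hXS)]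
    · exact absurd hmX (Finset.disjoint_left.1 h' hmP)
  obtain ⟨C, hC, D, hD, hcd, hu, hc1, hd1⟩ := hsplit P hPt hP2
  have main : ∀ C D : Finset ℕ, C ∈ t → D ∈ t → Disjoint C D → C ∪ D = P →
      C.Nonempty → D.Nonempty → m ∈ D →
      ∃ A ∈ resMap m t, t = insMap m (resMap m t) A := by
    clear hC hD hcd hu hc1 hd1
    intro C D hC hD hcd hu hc1 hd1 hmD
    have hmC : m ∉ C := fun hc => Finset.disjoint_left.1 hcd hc hmD
    have hDm : D = {m} := by
      by_contra hne
      have hPD := hPsub D hD hmD hne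
      obtain ⟨c, hc⟩ := hc1
      have : c ∈ D := hPD (hu ▸ Finset.mem_union_left _ hc)
      exact Finset.disjoint_left.1 hcd hc this
    have hPC : P = insert m C := by
      rw [← hu, hDm, Finset.insert_eq, Finset.union_comm]
    have hCP : C = P.erase m := by
      rw [hPC, Finset.erase_insert hmC]
    have hCres : C ∈ resMap m t :=
      mem_resMap.2 ⟨hc1.ne_empty, C, hC, Finset.erase_eq_of_notMem hmC⟩
    refine ⟨C, hCres, ?_⟩
    ext X
    constructor
    · intro hX
      by_cases hmX : m ∈ X
      · by_cases hXm : X = {m}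
        · exact mem_insMap.2 (Or.inr (Or.inr (Or.inr hXm)))
        · have hPX := hPsub X hX hmX hXm
          have hXne : X.erase m ≠ ∅ := by
            intro hEq
            apply hXm
            apply Finset.Subset.antisymm
            · intro x hx
              by_cases hxm : x = m
              · simp [hxm]
              · exact absurd (Finset.mem_erase.2 ⟨hxm, hx⟩) (by rw [hEq]; simp)
            · simp [hmX]
          refine mem_insMap.2 (Or.inr (Or.inl ⟨X.erase m,
            mem_resMap.2 ⟨hXne, X, hX, rfl⟩, ?_, (Finset.insert_erase hmX).symm⟩))
          rw [hCP]
          exact Finset.erase_subset_erase m hPX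
      · have hXres : X ∈ resMap m t :=
          mem_resMap.2 ⟨(hsub X hX).1.ne_empty, X, hX, Finset.erase_eq_of_notMem hmX⟩
        by_cases hCX : C ⊆ X
        · have hXC : X = C := by
            rcases hlam X hX P hPt with h' | h' | h'
            · apply Finset.Subset.antisymm _ hCX
              rw [hCP]
              exact Finset.subset_erase.2 ⟨h', hmX⟩
            · exact absurd (h' hmP) hmX
            · obtain ⟨c, hc⟩ := hc1
              have hcP : c ∈ P := hu ▸ Finset.mem_union_left _ hc
              exact absurd hcP (Finset.disjoint_left.1 h' (hCX hc))
          exact mem_insMap.2 (Or.inr (Or.inr (Or.inl hXC)))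
        · exact mem_insMap.2 (Or.inl ⟨hXres, hCX⟩)
    · intro hX
      rcases mem_insMap.1 hX with ⟨hXres, hnCX⟩ | ⟨B', hB', hCB', rfl⟩ | rfl | rfl
      · obtain ⟨hXne, Y, hY, rfl⟩ := mem_resMap.1 hXres
        by_cases hmY : m ∈ Y
        · have hYm : Y ≠ {m} := by
            intro hEq
            rw [hEq, Finset.erase_singleton] at hXne
            exact hXne rfl
          have hPY := hPsub Y hY hmY hYm
          exact absurd (hCP ▸ Finset.erase_subset_erase m hPY) hnCX
        · rwa [Finset.erase_eq_of_notMem hmY]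
      · obtain ⟨hXne, Y, hY, rfl⟩ := mem_resMap.1 hB'
        by_cases hmY : m ∈ Y
        · rwa [Finset.insert_erase hmY]
        · rw [Finset.erase_eq_of_notMem hmY] at hCB' ⊢
          have hYC : Y = C := by
            rcases hlam Y hY P hPt with h' | h' | h'
            · apply Finset.Subset.antisymm _ hCB'
              rw [hCP]
              exact Finset.subset_erase.2 ⟨h', hmY⟩
            · exact absurd (h' hmP) hmY
            · obtain ⟨c, hc⟩ := hc1
              have hcP : c ∈ P := hu ▸ Finset.mem_union_left _ hc
              exact absurd hcP (Finset.disjoint_left.1 h' (hCB' hc))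
          rw [hYC, ← hPC]
          exact hPt
      · exact hC
      · exact hsing m hmm
  have hmCD : m ∈ C ∪ D := by rw [hu]; exact hmP
  rcases Finset.mem_union.1 hmCD with hmD | hmD
  · exact main D C hD hC hcd.symm (by rw [Finset.union_comm]; exact hu) hd1 hc1 hmD
  · exact main C D hC hD hcd hu hc1 hd1 hmD

lemma doubleFactorial_odd_succ (k : ℕ) :
    Nat.doubleFactorial (2 * k + 1) = (2 * k + 1) * Nat.doubleFactorial (2 * k - 1) := by
  cases k with
  | zero => rfl
  | succ k =>
    have h1 : 2 * (k + 1) + 1 = (2 * k + 1) + 2 := by ring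
    have h2 : 2 * (k + 1) - 1 = 2 * k + 1 := by omega
    rw [h1, Nat.doubleFactorial_add_two, h2]

lemma allBinFrags_singleton (b : ℕ) :
    allBinFrags {b} = {({({b} : Finset ℕ)} : Finset (Finset ℕ))} := by
  ext t
  rw [mem_allBinFrags, Finset.mem_singleton]
  constructor
  · intro h
    apply Finset.eq_singleton_iff_unique_mem.2
    refine ⟨h.1, fun A hA => ?_⟩
    have h1 := h.2.1 A hA
    exact Finset.eq_of_subset_of_card_le h1.2
      (by rw [Finset.card_singleton]; exact Finset.card_pos.2 h1.1)
  · rintro rfl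
    refine ⟨Finset.mem_singleton_self _, ?_, ?_, ?_, ?_⟩
    · intro A hA
      rw [Finset.mem_singleton] at hA
      subst hA
      exact ⟨Finset.singleton_nonempty b, Finset.Subset.refl _⟩
    · intro X hX Y hY
      rw [Finset.mem_singleton] at hX hY
      subst hX; subst hY
      exact Or.inl (Finset.Subset.refl _)
    · intro c hc
      rw [Finset.mem_singleton] at hc
      subst hc
      exact Finset.mem_singleton_self _
    · intro A hA h2
      rw [Finset.mem_singleton] at hA
      subst hA
      rw [Finset.card_singleton] at h2
      omega

lemma card_allBinFrags_insert {m : ℕ} {B : Finset ℕ} (hm : m ∉ B) (hBne : B.Nonempty) :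
    (allBinFrags (insert m B)).card = (2 * B.card - 1) * (allBinFrags B).card := by
  classical
  have key : ∀ t' ∈ allBinFrags B,
      ((allBinFrags (insert m B)).filter (fun t => resMap m t = t')).card
        = 2 * B.card - 1 := by
    intro t' ht'
    have hfrag' := mem_allBinFrags.1 ht'
    have himg : (allBinFrags (insert m B)).filter (fun t => resMap m t = t')
        = t'.image (fun A => insMap m t' A) := by
      ext t
      rw [Finset.mem_filter, Finset.mem_image]
      constructor
      · rintro ⟨ht, rfl⟩
        obtain ⟨A, hA, hEq⟩ := frag_fiber hm hBne (mem_allBinFrags.1 ht)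
        exact ⟨A, hA, hEq.symm⟩
      · rintro ⟨A, hA, rfl⟩
        exact ⟨mem_allBinFrags.2 (insMap_frag hm hfrag' hA),
          resMap_insMap hm hfrag' hA⟩
    rw [himg,
      Finset.card_image_of_injOn (fun A hA A' hA' hEq => insMap_inj hm hfrag' hA hA' hEq),
      frag_card B.card B t' le_rfl hfrag']
  calc (allBinFrags (insert m B)).card
      = ∑ t' ∈ allBinFrags B,
          ((allBinFrags (insert m B)).filter (fun t => resMap m t = t')).card :=
        Finset.card_eq_sum_card_fiberwise
          (fun t ht => mem_allBinFrags.2 (resMap_frag hm hBne (mem_allBinFrags.1 ht)))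
    _ = ∑ _t' ∈ allBinFrags B, (2 * B.card - 1) := Finset.sum_congr rfl key
    _ = (allBinFrags B).card * (2 * B.card - 1) := by
        rw [Finset.sum_const, smul_eq_mul]
    _ = (2 * B.card - 1) * (allBinFrags B).card := mul_comm _ _

theorem card_binFrags (n : ℕ) (hn : 1 ≤ n) :
    (allBinFrags (Finset.Icc 1 n)).card * (2 ^ (n - 1) * (n - 1).factorial) =
      (2 * n - 2).factorial ∧
    (allBinFrags (Finset.Icc 1 n)).card = Nat.doubleFactorial (2 * n - 3) := by
  induction n, hn using Nat.le_induction with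
  | base =>
    rw [Finset.Icc_self, allBinFrags_singleton, Finset.card_singleton]
    norm_num [Nat.doubleFactorial]
  | succ n hn ih =>
    obtain ⟨k, rfl⟩ : ∃ k, n = k + 1 := ⟨n - 1, by omega⟩
    obtain ⟨ih1, ih2⟩ := ih
    have e1 : 2 * (k + 1) - 2 = 2 * k := by omega
    have e2 : 2 * (k + 1) - 3 = 2 * k - 1 := by omega
    have e3 : (k + 1) - 1 = k := by omega
    rw [e1, e3] at ih1
    rw [e2] at ih2
    have hIcc : Finset.Icc 1 (k + 1 + 1) = insert (k + 2) (Finset.Icc 1 (k + 1)) := by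
      ext x
      simp only [Finset.mem_Icc, Finset.mem_insert]
      omega
    have hm : (k + 2) ∉ Finset.Icc 1 (k + 1) := by
      simp only [Finset.mem_Icc]
      omega
    have hne : (Finset.Icc 1 (k + 1)).Nonempty := ⟨1, by simp⟩
    have hcard : (Finset.Icc 1 (k + 1)).card = k + 1 := by
      rw [Nat.card_Icc]
      omega
    have hrec : (allBinFrags (Finset.Icc 1 (k + 1 + 1))).card
        = (2 * k + 1) * (allBinFrags (Finset.Icc 1 (k + 1))).card := by
      rw [hIcc, card_allBinFrags_insert hm hne, hcard,
        show 2 * (k + 1) - 1 = 2 * k + 1 by omega]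
    set cN := (allBinFrags (Finset.Icc 1 (k + 1))).card with hcN
    constructor
    · rw [hrec]
      have e4 : 2 * (k + 1 + 1) - 2 = (2 * k + 1) + 1 := by omega
      have e5 : (k + 1 + 1) - 1 = k + 1 := by omega
      rw [e4, e5, Nat.factorial_succ (2 * k + 1)]
      have e6 : (2 * k + 1) + 1 = 2 * (k + 1) := by omega
      calc (2 * k + 1) * cN * (2 ^ (k + 1) * (k + 1).factorial)
          = ((2 * k + 1) + 1) * ((2 * k + 1) * (cN * (2 ^ k * k.factorial))) := by
            rw [pow_succ, Nat.factorial_succ]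
            ring
        _ = ((2 * k + 1) + 1) * ((2 * k + 1) * (2 * k).factorial) := by rw [ih1]
        _ = ((2 * k + 1) + 1) * ((2 * k + 1) * (2 * k).factorial) := rfl
    · rw [hrec, ih2]
      have e7 : 2 * (k + 1 + 1) - 3 = 2 * k + 1 := by omega
      rw [e7, doubleFactorial_odd_succ]
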